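/- arXiv:0806.3421 — 3 statements merged into one kernel-verified Lean document; each statement's English description precedes it below -/
import Mathlib

section
/- Let p be a prime and m ≥ 1. In the quotient ring (ZMod (p^2))[Y] / (∏_{i=0}^{p-1} (Y - i)), the element Σ_{i=0}^{p-1} (Y - i)^(p^m - 1) equals the element Σ_{i=0}^{p-1} (Y - i)^(p - 1). -/
open Polynomial

lemma unit_pow_eq (p m : ℕ) (hp : p.Prime) (hm : 1 ≤ m) {a : ZMod (p ^ 2)}
    (ha : IsUnit a) : a ^ (p ^ m - 1) = a ^ (p - 1) := by
  obtain ⟨u, rfl⟩ := ha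
  have hφ : Nat.totient (p ^ 2) = p * (p - 1) := by
    rw [show (2:ℕ) = 1 + 1 from rfl, Nat.totient_prime_pow hp (by norm_num)]
    ring_nf
  have h1 : u ^ (p * (p - 1)) = 1 := by rw [← hφ]; exact ZMod.pow_totient u
  have hdvd : p * (p - 1) ∣ p ^ m - p := by
    have : p ^ m - p = p * (p ^ (m - 1) - 1) := by
      rw [Nat.mul_sub, mul_one, ← pow_succ', Nat.sub_add_cancel hm]
    rw [this]
    exact Nat.mul_dvd_mul_left p (by
      have := Nat.sub_dvd_pow_sub_pow p 1 (m - 1)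
      simpa using this)
  obtain ⟨k, hk⟩ := hdvd
  have hle : p ≤ p ^ m := Nat.le_self_pow (by omega) p
  have hsplit : p ^ m - 1 = (p ^ m - p) + (p - 1) := by
    have : 1 ≤ p := hp.one_lt.le
    omega
  have hu : u ^ (p ^ m - 1) = u ^ (p - 1) := by
    rw [hsplit, pow_add, hk, pow_mul, h1, one_pow, one_mul]
  calc (u : ZMod (p^2)) ^ (p ^ m - 1) = ((u ^ (p ^ m - 1) : (ZMod (p^2))ˣ) : ZMod (p^2)) := by
        push_cast; ring
    _ = ((u ^ (p - 1) : (ZMod (p^2))ˣ) : ZMod (p^2)) := by rw [hu]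
    _ = (u : ZMod (p^2)) ^ (p - 1) := by push_cast; ring

lemma unit_sub (p : ℕ) (hp : p.Prime) {i j : ℕ} (hi : i < p) (hj : j < p) (hij : i ≠ j) :
    IsUnit ((j : ZMod (p ^ 2)) - (i : ZMod (p ^ 2))) := by
  have key : ∀ a b : ℕ, a < b → b < p → IsUnit ((b : ZMod (p ^ 2)) - (a : ZMod (p ^ 2))) := by
    intro a b hab hbp
    have : ((b : ZMod (p ^ 2)) - (a : ZMod (p ^ 2))) = ((b - a : ℕ) : ZMod (p ^ 2)) := by
      push_cast [Nat.cast_sub hab.le]; ring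
    rw [this, ZMod.isUnit_iff_coprime]
    refine Nat.Coprime.pow_right _ ?_
    exact Nat.coprime_comm.mp ((Nat.Prime.coprime_iff_not_dvd hp).mpr
      (Nat.not_dvd_of_pos_of_lt (by omega) (by omega)))
  rcases lt_or_gt_of_ne hij with h | h
  · exact key i j h hj
  · simpa using (key j i h hi).neg

lemma coprime_lin {R : Type*} [CommRing R] {a b : R} (h : IsUnit (a - b)) :
    IsCoprime (X - C a) (X - C b) := by
  obtain ⟨u, hu⟩ := h
  refine ⟨-C ((u⁻¹ : Rˣ) : R), C ((u⁻¹ : Rˣ) : R), ?_⟩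
  have h1 : -C ((u⁻¹ : Rˣ) : R) * (X - C a) + C ((u⁻¹ : Rˣ) : R) * (X - C b) =
      C ((u⁻¹ : Rˣ) : R) * C (a - b) := by
    rw [C_sub]; ring
  rw [h1, ← hu, ← C_mul]
  simp

theorem stmt_3 (p : ℕ) (hp : p.Prime) (m : ℕ) (hm : 1 ≤ m) :
    Ideal.Quotient.mk
        (Ideal.span {∏ i ∈ Finset.range p,
          (Polynomial.X - Polynomial.C ((i : ℕ) : ZMod (p ^ 2)))})
        (∑ i ∈ Finset.range p,
          (Polynomial.X - Polynomial.C ((i : ℕ) : ZMod (p ^ 2))) ^ (p ^ m - 1)) =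
      Ideal.Quotient.mk _
        (∑ i ∈ Finset.range p,
          (Polynomial.X - Polynomial.C ((i : ℕ) : ZMod (p ^ 2))) ^ (p - 1)) := by
  rw [Ideal.Quotient.eq, Ideal.mem_span_singleton]
  apply Finset.prod_dvd_of_coprime
  · intro i hi j hj hij
    simp only [Finset.coe_range, Set.mem_Iio] at hi hj
    simp only [Function.onFun]
    exact coprime_lin (unit_sub p hp hj hi (Ne.symm hij))
  · intro j hj
    rw [Polynomial.dvd_iff_isRoot]
    simp only [Finset.mem_range] at hj
    simp only [Polynomial.IsRoot, Polynomial.eval_sub, Polynomial.eval_finset_sum,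
      Polynomial.eval_pow, Polynomial.eval_X, Polynomial.eval_C]
    rw [sub_eq_zero]
    apply Finset.sum_congr rfl
    intro i hi
    simp only [Finset.mem_range] at hi
    by_cases hij : i = j
    · subst hij
      have h1 : p ^ m - 1 ≠ 0 := by
        have := Nat.one_lt_pow (n := m) (by omega) hp.one_lt; omega
      have h2 : p - 1 ≠ 0 := by have := hp.one_lt; omega
      simp only [sub_self]
      rw [zero_pow h1, zero_pow h2]
    · exact unit_pow_eq p m hp hm (unit_sub p hp hi hj hij)
end

section
/- Let p be a prime and m ≥ 1. In the polynomial ring (ZMod (p^2))[x, y], there is a polynomial c whose degree in y is strictly less than p - 1 such that Σ_{i=0}^{p-1} (y - i·x)^(p^m - 1) is congruent to p · x^(p^m - p) · y^(p-1) + c modulo the ideal generated by ∏_{i=0}^{p-1} (y - i·x). -/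
open Polynomial in
private lemma aux_prod_dvd {B : Type*} [CommRing B] (t : Finset ℕ) (ξ : ℕ → B)
    (hreg : ∀ a ∈ t, ∀ b ∈ t, a ≠ b → ∀ z : B, (ξ a - ξ b) * z = 0 → z = 0)
    (g : B[X]) (hg : ∀ a ∈ t, g.eval (ξ a) = 0) :
    (∏ a ∈ t, (X - C (ξ a))) ∣ g := by
  classical
  induction t using Finset.induction_on generalizing g with
  | empty => simp
  | @insert a s ha ih =>
    have h1 : (X - C (ξ a)) ∣ g :=
      dvd_iff_isRoot.mpr (hg a (Finset.mem_insert_self a s))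
    obtain ⟨g', rfl⟩ := h1
    rw [Finset.prod_insert ha]
    refine mul_dvd_mul_left _ (ih (fun x hx y hy hxy => hreg x (Finset.mem_insert_of_mem hx) y
      (Finset.mem_insert_of_mem hy) hxy) g' ?_)
    intro b hb
    have hb' := hg b (Finset.mem_insert_of_mem hb)
    have hba : b ≠ a := fun h => ha (h ▸ hb)
    simp only [eval_mul, eval_sub, eval_X, eval_C] at hb'
    exact hreg b (Finset.mem_insert_of_mem hb) a (Finset.mem_insert_self a s) hba _ hb'

private lemma aux_isUnit (p : ℕ) (hp : p.Prime) (a i : ℕ) (ha : a < p) (hi : i < p)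
    (hne : a ≠ i) : IsUnit ((a : ZMod (p ^ 2)) - i) := by
  have key : ∀ d : ℕ, 0 < d → d < p → IsUnit ((d : ZMod (p ^ 2))) := by
    intro d hd0 hdp
    rw [ZMod.isUnit_iff_coprime]
    exact Nat.Coprime.pow_right 2
      ((hp.coprime_iff_not_dvd.mpr (Nat.not_dvd_of_pos_of_lt hd0 hdp)).symm)
  rcases lt_or_gt_of_ne hne with h | h
  · have heq : ((a : ZMod (p ^ 2)) - i) = -((i - a : ℕ) : ZMod (p ^ 2)) := by
      push_cast [Nat.cast_sub h.le]; ring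
    rw [heq]
    exact (key (i - a) (by omega) (by omega)).neg
  · have heq : ((a : ZMod (p ^ 2)) - i) = ((a - i : ℕ) : ZMod (p ^ 2)) := by
      push_cast [Nat.cast_sub h.le]; ring
    rw [heq]
    exact key (a - i) (by omega) (by omega)

private lemma aux_pow_eq (p : ℕ) (hp : p.Prime) (m : ℕ) (hm : 1 ≤ m) (a i : ℕ)
    (ha : a < p) (hi : i < p) :
    ((a : ZMod (p ^ 2)) - i) ^ (p ^ m - 1) = ((a : ZMod (p ^ 2)) - i) ^ (p - 1) := by
  have hp2 := hp.two_le
  have hpm : p ≤ p ^ m := Nat.le_self_pow (by omega) p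
  rcases eq_or_ne a i with rfl | hne
  · rw [sub_self, zero_pow (by omega), zero_pow (by omega)]
  obtain ⟨u, hu⟩ := aux_isUnit p hp a i ha hi hne
  have hdvd : Nat.totient (p ^ 2) ∣ p ^ m - p := by
    rw [Nat.totient_prime_pow hp (by norm_num : 0 < 2)]
    have h1 : p - 1 ∣ p ^ (m - 1) - 1 := by
      simpa using Nat.sub_dvd_pow_sub_pow p 1 (m - 1)
    have h2 : p ^ m - p = p * (p ^ (m - 1) - 1) := by
      rw [Nat.mul_sub, mul_one, ← pow_succ']
      congr 2
      omega
    rw [h2, pow_one]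
    exact mul_dvd_mul_left p h1
  obtain ⟨k, hk⟩ := hdvd
  have hu1 : u ^ (p ^ m - p) = 1 := by
    rw [hk, pow_mul, ZMod.pow_totient, one_pow]
  have hkey : u ^ (p ^ m - 1) = u ^ (p - 1) := by
    have he : p ^ m - 1 = (p - 1) + (p ^ m - p) := by omega
    rw [he, pow_add, hu1, mul_one]
  rw [← hu, ← Units.val_pow_eq_pow_val, ← Units.val_pow_eq_pow_val, hkey]

open Polynomial in
private lemma aux_poly (p m : ℕ) (hp : p.Prime) (hm : 1 ≤ m) :
    (∏ i ∈ Finset.range p, (X - C ((i : Polynomial (ZMod (p ^ 2))) * X))) ∣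
      ((∑ i ∈ Finset.range p,
          (X - C ((i : Polynomial (ZMod (p ^ 2))) * X)) ^ (p ^ m - 1))
        - C ((X : Polynomial (ZMod (p ^ 2))) ^ (p ^ m - p)) *
          ∑ i ∈ Finset.range p,
            (X - C ((i : Polynomial (ZMod (p ^ 2))) * X)) ^ (p - 1)) := by
  classical
  have hp2 := hp.two_le
  have hpm : p ≤ p ^ m := Nat.le_self_pow (by omega) p
  haveI : Fact (1 < p ^ 2) := ⟨by nlinarith⟩
  set R := ZMod (p ^ 2)
  set B := Polynomial R
  set F := ∏ i ∈ Finset.range p, ((X : Polynomial B) - C ((i : B) * X)) with hFdef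
  set D := (∑ i ∈ Finset.range p, ((X : Polynomial B) - C ((i : B) * X)) ^ (p ^ m - 1))
      - C ((X : B) ^ (p ^ m - p)) *
        ∑ i ∈ Finset.range p, ((X : Polynomial B) - C ((i : B) * X)) ^ (p - 1) with hDdef
  have hmon : F.Monic := monic_prod_of_monic _ _ fun i _ => monic_X_sub_C _
  rw [← Polynomial.modByMonic_eq_zero_iff_dvd hmon]
  set r := D %ₘ F with hrdef
  have heval : ∀ a ∈ Finset.range p, r.eval ((a : B) * X) = 0 := by
    intro a ha'
    have ha : a < p := Finset.mem_range.mp ha'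
    have haF : F.eval ((a : B) * X) = 0 := by
      rw [hFdef, eval_prod]
      exact Finset.prod_eq_zero ha' (by simp)
    have haD : D.eval ((a : B) * X) = 0 := by
      rw [hDdef]
      simp only [eval_sub, eval_mul, eval_C, eval_finset_sum, eval_pow, eval_X]
      rw [Finset.mul_sum, ← Finset.sum_sub_distrib]
      refine Finset.sum_eq_zero fun i hi => ?_
      have hterm : ((a : B) * X - (i : B) * X) = C ((a : R) - (i : R)) * X := by
        rw [map_sub, Polynomial.C_eq_natCast, Polynomial.C_eq_natCast]
        ring
      rw [hterm, mul_pow, mul_pow, ← Polynomial.C_pow, ← Polynomial.C_pow,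
        aux_pow_eq p hp m hm a i ha (Finset.mem_range.mp hi),
        show p ^ m - 1 = (p ^ m - p) + (p - 1) from by omega, pow_add]
      ring
    have h2 := congrArg (Polynomial.eval ((a : B) * X)) (modByMonic_add_div D F)
    simp only [eval_add, eval_mul, haF, zero_mul, add_zero, haD] at h2
    exact h2
  have hreg : ∀ a ∈ Finset.range p, ∀ b ∈ Finset.range p, a ≠ b →
      ∀ z : B, ((a : B) * X - (b : B) * X) * z = 0 → z = 0 := by
    intro a ha b hb hab z hz
    have hdiff : ((a : B) * X - (b : B) * X) = C ((a : R) - (b : R)) * X := by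
      rw [map_sub, Polynomial.C_eq_natCast, Polynomial.C_eq_natCast]
      ring
    rw [hdiff] at hz
    obtain ⟨u, hu⟩ := aux_isUnit p hp a b (Finset.mem_range.mp ha) (Finset.mem_range.mp hb) hab
    have hz2 : (X : B) * z = 0 := by
      have h3 := congrArg (fun w => C (((u⁻¹ : (ZMod (p ^ 2))ˣ) : R)) * w) hz
      simp only [mul_zero] at h3
      rw [← mul_assoc, ← mul_assoc, ← C_mul, ← hu, Units.inv_mul, C_1, one_mul] at h3
      exact h3
    ext n
    have h4 : ((X : B) * z).coeff (n + 1) = (0 : B).coeff (n + 1) := by rw [hz2]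
    rw [Polynomial.coeff_X_mul, Polynomial.coeff_zero] at h4
    simpa using h4
  have hdvd2 : F ∣ r := aux_prod_dvd (Finset.range p) (fun a => (a : B) * X) hreg r heval
  have hdeg : r.degree < F.degree := degree_modByMonic_lt D hmon
  have h4 : r %ₘ F = r := (modByMonic_eq_self_iff hmon).mpr hdeg
  have h5 : r %ₘ F = 0 := (modByMonic_eq_zero_iff_dvd hmon).mpr hdvd2
  rw [← h4, h5]

open MvPolynomial in
theorem stmt_4 (p : ℕ) (hp : p.Prime) (m : ℕ) (hm : 1 ≤ m) :
    ∃ c : MvPolynomial (Fin 2) (ZMod (p ^ 2)),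
      MvPolynomial.degreeOf 1 c < p - 1 ∧
      (∑ i ∈ Finset.range p, (X 1 - (i : MvPolynomial (Fin 2) (ZMod (p ^ 2))) * X 0) ^ (p ^ m - 1))
          - ((p : MvPolynomial (Fin 2) (ZMod (p ^ 2))) * (X 0) ^ (p ^ m - p) * (X 1) ^ (p - 1) + c)
        ∈ Ideal.span
            {∏ i ∈ Finset.range p,
              (X 1 - (i : MvPolynomial (Fin 2) (ZMod (p ^ 2))) * X 0)} := by
  classical
  set R := ZMod (p ^ 2) with hR
  have hp2 : 2 ≤ p := hp.two_le
  have hpm : p ≤ p ^ m := Nat.le_self_pow (by omega) p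
  haveI : Fact (1 < p ^ 2) := ⟨by nlinarith⟩
  set N := p ^ m with hN
  set S1 : MvPolynomial (Fin 2) R :=
    ∑ i ∈ Finset.range p, (X 1 - (i : MvPolynomial (Fin 2) R) * X 0) ^ (p - 1) with hS1
  set c : MvPolynomial (Fin 2) R :=
    (X 0) ^ (N - p) * (S1 - (p : MvPolynomial (Fin 2) R) * (X 1) ^ (p - 1)) with hc
  refine ⟨c, ?_, ?_⟩
  · -- degree bound
    have hnat : ∀ n : ℕ, ((n : MvPolynomial (Fin 2) R)) = MvPolynomial.C (n : R) :=
      fun n => (map_natCast (MvPolynomial.C : R →+* MvPolynomial (Fin 2) R) n).symm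
    have hX0 : degreeOf (1 : Fin 2) (X 0 : MvPolynomial (Fin 2) R) = 0 := by
      rw [degreeOf_X]; simp
    have hXd : degreeOf (1 : Fin 2) ((X 0 : MvPolynomial (Fin 2) R) ^ (N - p)) = 0 := by
      refine Nat.eq_zero_of_le_zero ((degreeOf_pow_le _ _ _).trans ?_)
      rw [hX0, mul_zero]
    have expand : ∀ i : ℕ, (X 1 - (i : MvPolynomial (Fin 2) R) * X 0) ^ (p - 1)
        = (∑ k ∈ Finset.range (p - 1), (X 1 : MvPolynomial (Fin 2) R) ^ k *
            (-((i : MvPolynomial (Fin 2) R)) * X 0) ^ (p - 1 - k) * ((p - 1).choose k : MvPolynomial (Fin 2) R))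
          + (X 1) ^ (p - 1) := by
      intro i
      rw [show (X 1 - (i : MvPolynomial (Fin 2) R) * X 0)
            = X 1 + (-((i : MvPolynomial (Fin 2) R))) * X 0 from by ring,
        add_pow, Finset.sum_range_succ]
      simp
    have hsplit : S1 - (p : MvPolynomial (Fin 2) R) * (X 1) ^ (p - 1)
        = ∑ i ∈ Finset.range p, ∑ k ∈ Finset.range (p - 1),
            (X 1 : MvPolynomial (Fin 2) R) ^ k *
            (-((i : MvPolynomial (Fin 2) R)) * X 0) ^ (p - 1 - k) *
            ((p - 1).choose k : MvPolynomial (Fin 2) R) := by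
      rw [hS1, Finset.sum_congr rfl fun i _ => expand i, Finset.sum_add_distrib,
        Finset.sum_const, Finset.card_range, nsmul_eq_mul]
      ring
    have hbound : degreeOf (1 : Fin 2)
        (S1 - (p : MvPolynomial (Fin 2) R) * (X 1) ^ (p - 1)) ≤ p - 2 := by
      rw [hsplit]
      refine (degreeOf_sum_le _ _ _).trans (Finset.sup_le fun i _ => ?_)
      refine (degreeOf_sum_le _ _ _).trans (Finset.sup_le fun k hk => ?_)
      have hk' : k < p - 1 := Finset.mem_range.mp hk
      refine le_trans (degreeOf_mul_le _ _ _) ?_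
      have d3 : degreeOf (1 : Fin 2) (((p - 1).choose k : MvPolynomial (Fin 2) R)) = 0 := by
        rw [hnat, degreeOf_C]
      have d1 : degreeOf (1 : Fin 2) ((X 1 : MvPolynomial (Fin 2) R) ^ k) ≤ k := by
        refine (degreeOf_pow_le _ _ _).trans ?_
        rw [degreeOf_X]
        simp
      have d2 : degreeOf (1 : Fin 2)
          ((-((i : MvPolynomial (Fin 2) R)) * X 0) ^ (p - 1 - k)) = 0 := by
        refine Nat.eq_zero_of_le_zero ((degreeOf_pow_le _ _ _).trans ?_)
        have : degreeOf (1 : Fin 2) (-((i : MvPolynomial (Fin 2) R)) * X 0) = 0 := by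
          refine Nat.eq_zero_of_le_zero ((degreeOf_mul_le _ _ _).trans ?_)
          rw [hnat, ← map_neg, degreeOf_C, hX0]
        rw [this, mul_zero]
      have := degreeOf_mul_le (1 : Fin 2)
        ((X 1 : MvPolynomial (Fin 2) R) ^ k) ((-((i : MvPolynomial (Fin 2) R)) * X 0) ^ (p - 1 - k))
      omega
    have := degreeOf_mul_le (1 : Fin 2) ((X 0 : MvPolynomial (Fin 2) R) ^ (N - p))
      (S1 - (p : MvPolynomial (Fin 2) R) * (X 1) ^ (p - 1))
    rw [hc]
    omega
  · -- ideal membership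
    rw [Ideal.mem_span_singleton]
    set B := Polynomial R with hB
    let E : MvPolynomial (Fin 2) R ≃ₐ[R] Polynomial B :=
      ((renameEquiv R (Equiv.swap 0 1)).trans
        ((finSuccEquiv R 1).trans
          (Polynomial.mapAlgEquiv ((finSuccEquiv R 0).trans
            (Polynomial.mapAlgEquiv (isEmptyAlgEquiv R (Fin 0)))))))
    have hre : ∀ q : MvPolynomial (Fin 2) R,
        (renameEquiv R (Equiv.swap (0 : Fin 2) 1)) q = rename (Equiv.swap 0 1) q := fun q => rfl
    have hmap : ∀ {S T : Type} [CommSemiring S] [CommSemiring T] [Algebra R S] [Algebra R T]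
        (g : S ≃ₐ[R] T) (q : Polynomial S),
        (Polynomial.mapAlgEquiv g) q = Polynomial.map (g : S →+* T) q := fun g q => rfl
    have hE1 : E (X 1) = Polynomial.X := by
      simp only [E, AlgEquiv.trans_apply]
      rw [hre, rename_X, Equiv.swap_apply_right, finSuccEquiv_X_zero, hmap, Polynomial.map_X]
    have hE0 : E (X 0) = Polynomial.C Polynomial.X := by
      have h01 : (1 : Fin 2) = Fin.succ 0 := rfl
      simp only [E, AlgEquiv.trans_apply]
      rw [hre, rename_X, Equiv.swap_apply_left, h01, finSuccEquiv_X_succ, hmap,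
        Polynomial.map_C]
      congr 1
      show ((MvPolynomial.finSuccEquiv R 0).trans
        (Polynomial.mapAlgEquiv (isEmptyAlgEquiv R (Fin 0)))) (X 0) = Polynomial.X
      rw [AlgEquiv.trans_apply, finSuccEquiv_X_zero, hmap, Polynomial.map_X]
    have transfer : ∀ u v : MvPolynomial (Fin 2) R, E u ∣ E v → u ∣ v := by
      intro u v h
      have h2 := map_dvd E.symm h
      simpa using h2
    have hrw : (∑ i ∈ Finset.range p, (X 1 - (i : MvPolynomial (Fin 2) R) * X 0) ^ (N - 1))
          - ((p : MvPolynomial (Fin 2) R) * (X 0) ^ (N - p) * (X 1) ^ (p - 1) + c)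
        = (∑ i ∈ Finset.range p, (X 1 - (i : MvPolynomial (Fin 2) R) * X 0) ^ (N - 1))
          - (X 0) ^ (N - p) * S1 := by
      rw [hc]; ring
    rw [hrw]
    refine transfer _ _ ?_
    have hEX : ∀ (i k : ℕ), E ((X 1 - (i : MvPolynomial (Fin 2) R) * X 0) ^ k)
        = (Polynomial.X - Polynomial.C ((i : B) * Polynomial.X)) ^ k := by
      intro i k
      rw [map_pow, map_sub, map_mul, hE1, hE0, map_natCast]
      congr 2
      rw [Polynomial.C_mul, Polynomial.C_eq_natCast]
    have e1 : E (∏ i ∈ Finset.range p, (X 1 - (i : MvPolynomial (Fin 2) R) * X 0))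
        = ∏ i ∈ Finset.range p, (Polynomial.X - Polynomial.C ((i : B) * Polynomial.X)) := by
      rw [map_prod]
      exact Finset.prod_congr rfl fun i _ => by simpa using hEX i 1
    have e2 : E ((∑ i ∈ Finset.range p, (X 1 - (i : MvPolynomial (Fin 2) R) * X 0) ^ (N - 1))
          - (X 0) ^ (N - p) * S1)
        = (∑ i ∈ Finset.range p,
            (Polynomial.X - Polynomial.C ((i : B) * Polynomial.X)) ^ (N - 1))
          - Polynomial.C ((Polynomial.X : B) ^ (N - p)) *
            ∑ i ∈ Finset.range p,
              (Polynomial.X - Polynomial.C ((i : B) * Polynomial.X)) ^ (p - 1) := by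
      rw [map_sub, map_sum, map_mul, map_pow, hE0, hS1, map_sum]
      congr 1
      · exact Finset.sum_congr rfl fun i _ => hEX i (N - 1)
      · congr 1
        · rw [← Polynomial.C_pow]
        · exact Finset.sum_congr rfl fun i _ => hEX i (p - 1)
    rw [e1, e2, hN]
    exact aux_poly p m hp hm
end

section
/- Let p be a prime, R a commutative algebra over ZMod p, and u ∈ R a regular element (non-zerodivisor). Then the R-algebra map R[z]/(z^p − u^(p-1)·z) → ∏_{i=0}^{p-1} R whose i-th component sends z to i·u is injective. -/
open Polynomial

theorem stmt_8 (p : ℕ) (hp : p.Prime) (R : Type*) [CommRing R] [Algebra (ZMod p) R]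
    (u : R) (hu : u ∈ nonZeroDivisors R) :
    ∃ φ : (Polynomial R ⧸
        Ideal.span {Polynomial.X ^ p - Polynomial.C (u ^ (p - 1)) * Polynomial.X}) →ₐ[R]
        (Fin p → R),
      Function.Injective φ ∧
      ∀ (f : Polynomial R) (i : Fin p),
        φ (Ideal.Quotient.mk _ f) i = f.eval (((i : ℕ) : R) * u) := by
  haveI : Fact p.Prime := ⟨hp⟩
  have hp2 : 2 ≤ p := hp.two_le
  set g : R[X] := X ^ p - C (u ^ (p - 1)) * X with hg
  -- key: (i : R) = algebraMap of (i : ZMod p)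
  have hcast : ∀ i : Fin p, ((i : ℕ) : R) = algebraMap (ZMod p) R ((i : ℕ) : ZMod p) := by
    intro i; simp [map_natCast]
  -- each node is a root of g
  have hroot : ∀ i : Fin p, g.eval (((i : ℕ) : R) * u) = 0 := by
    intro i
    have hip : (((i : ℕ) : R)) ^ p = ((i : ℕ) : R) := by
      rw [hcast, ← map_pow, ZMod.pow_card]
    have hup : u ^ p = u ^ (p - 1) * u := by
      rw [← pow_succ, Nat.sub_add_cancel (le_of_lt hp.one_lt)]
    simp only [hg, eval_sub, eval_mul, eval_pow, eval_X, eval_C]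
    rw [mul_pow, hip, hup]; ring
  -- the algebra hom on R[X]
  set ψ : R[X] →ₐ[R] (Fin p → R) :=
    Pi.algHom R _ (fun i : Fin p => Polynomial.aeval (((i : ℕ) : R) * u)) with hψ
  have hψ_apply : ∀ (f : R[X]) (i : Fin p), ψ f i = f.eval (((i : ℕ) : R) * u) := by
    intro f i; simp [hψ, Polynomial.aeval_def, Polynomial.eval_map, Polynomial.eval₂_eq_eval_map]
  have hvanish : ∀ f ∈ Ideal.span {g}, ψ f = 0 := by
    intro f hf
    rw [Ideal.mem_span_singleton] at hf
    obtain ⟨q, rfl⟩ := hf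
    funext i
    rw [hψ_apply]
    simp [hroot i]
  refine ⟨Ideal.Quotient.liftₐ _ ψ hvanish, ?_, ?_⟩
  · -- injectivity
    rw [injective_iff_map_eq_zero]
    intro a ha
    obtain ⟨f, rfl⟩ := Ideal.Quotient.mk_surjective a
    rw [Ideal.Quotient.eq_zero_iff_mem, Ideal.mem_span_singleton]
    have hψf : ∀ i : Fin p, f.eval (((i : ℕ) : R) * u) = 0 := by
      intro i
      have h2 := congrFun ha i
      rw [Ideal.Quotient.liftₐ_apply] at h2
      change ψ f i = 0 at h2
      rw [← hψ_apply f i]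
      exact h2
    -- g is monic
    have hgm : g.Monic := by
      have hrw : g = X ^ ((p - 1) + 1) - C (u ^ (p - 1)) * X := by
        rw [hg, Nat.sub_add_cancel hp.one_le]
      rw [hrw]
      apply Polynomial.monic_X_pow_sub
      apply lt_of_le_of_lt (Polynomial.degree_mul_le _ _)
      apply lt_of_le_of_lt (add_le_add Polynomial.degree_C_le Polynomial.degree_X_le)
      rw [zero_add]
      exact_mod_cast (by omega : 1 < p - 1 + 1)
    rcases subsingleton_or_nontrivial R with hR | hR
    · exact ⟨0, Subsingleton.elim _ _⟩
    set r := f %ₘ g with hr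
    have hrdeg : r.degree < (p : WithBot ℕ) := by
      have := Polynomial.degree_modByMonic_lt f hgm
      rwa [show g.degree = (p : WithBot ℕ) from ?_] at this
      rw [hg]
      have h1 : (C (u ^ (p - 1)) * X).degree < (X ^ p : R[X]).degree := by
        rw [Polynomial.degree_X_pow]
        apply lt_of_le_of_lt (Polynomial.degree_mul_le _ _)
        apply lt_of_le_of_lt (add_le_add Polynomial.degree_C_le le_rfl)
        rw [Polynomial.degree_X]
        exact_mod_cast hp.one_lt
      rw [Polynomial.degree_sub_eq_left_of_degree_lt h1, Polynomial.degree_X_pow]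
    have hrndeg : r.natDegree < p := by
      rcases eq_or_ne r 0 with h0 | h0
      · simp [h0, hp.pos]
      · exact_mod_cast (Polynomial.degree_eq_natDegree h0 ▸ hrdeg)
    have hreval : ∀ i : Fin p, r.eval (((i : ℕ) : R) * u) = 0 := by
      intro i
      have := Polynomial.modByMonic_add_div f g
      have h2 := congrArg (Polynomial.eval (((i : ℕ) : R) * u)) this
      simp only [Polynomial.eval_add, Polynomial.eval_mul, hroot i, zero_mul,
        add_zero] at h2
      rw [← hr] at h2
      rw [h2, hψf i]
    -- Vandermonde argument: r = 0
    have hr0 : r = 0 := by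
      set M₀ : Matrix (Fin p) (Fin p) (ZMod p) :=
        Matrix.vandermonde (fun i : Fin p => ((i : ℕ) : ZMod p)) with hM₀
      have hinj : Function.Injective (fun i : Fin p => ((i : ℕ) : ZMod p)) := by
        intro a b h
        apply Fin.ext
        have ha := ZMod.val_cast_of_lt a.isLt
        have hb := ZMod.val_cast_of_lt b.isLt
        simp only at h
        rw [← ha, ← hb, h]
      have hdet : IsUnit M₀.det := by
        rw [isUnit_iff_ne_zero, Ne, Matrix.det_vandermonde_eq_zero_iff]
        rintro ⟨i, j, hij, hne⟩
        exact hne (hinj hij)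
      set M : Matrix (Fin p) (Fin p) R := M₀.map (algebraMap (ZMod p) R) with hM
      have hdetM : IsUnit M.det := by
        rw [hM, ← RingHom.mapMatrix_apply, ← RingHom.map_det]
        exact hdet.map _
      haveI : Invertible M := M.invertibleOfIsUnitDet hdetM
      set v : Fin p → R := fun j => u ^ (j : ℕ) * r.coeff j with hv
      have hmv : M.mulVec v = 0 := by
        funext i
        have he : ∑ j : Fin p, r.coeff (j : ℕ) * ((((i : ℕ) : R)) * u) ^ (j : ℕ) = 0 := by
          rw [Fin.sum_univ_eq_sum_range (fun j => r.coeff j * ((((i : ℕ) : R)) * u) ^ j) p,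
            ← Polynomial.eval_eq_sum_range' hrndeg]
          exact hreval i
        rw [Matrix.mulVec, dotProduct, Pi.zero_apply, ← he]
        apply Finset.sum_congr rfl
        intro j _
        simp only [hM, hM₀, Matrix.map_apply, Matrix.vandermonde_apply, hv]
        rw [map_pow, ← hcast i, mul_pow]
        ring
      have hv0 : v = 0 := by
        have := congrArg (fun w => (⅟M).mulVec w) hmv
        simpa [Matrix.mulVec_mulVec, Matrix.mulVec_zero] using this
      have hcoeff : ∀ j : ℕ, r.coeff j = 0 := by
        intro j
        rcases lt_or_ge j p with hjp | hjp
        · have := congrFun hv0 ⟨j, hjp⟩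
          simp only [hv, Pi.zero_apply] at this
          rw [mul_comm] at this
          exact (pow_mem hu j).2 _ this
        · exact Polynomial.coeff_eq_zero_of_natDegree_lt (lt_of_lt_of_le hrndeg hjp)
      ext j
      simp [hcoeff j]
    rw [← Polynomial.modByMonic_eq_zero_iff_dvd hgm]
    exact hr0
  · intro f i
    rw [Ideal.Quotient.liftₐ_apply]
    change ψ f i = _
    exact hψ_apply f i
end
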